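/- The map Ψ : (−1,1)³ → {3×3 correlation matrices} sending (ρ_{12}, ρ_{23}, ρ_{13|2}) to the symmetric matrix Y with unit diagonal, y_{12} = ρ_{12}, y_{23} = ρ_{23}, and y_{13} = ρ_{12}ρ_{23} − ρ_{13|2}√(1−ρ_{12}²)√(1−ρ_{23}²), is well-defined (Y is positive definite) and a bijection onto the set of 3×3 correlation matrices. -/

import Mathlib

/-- A 3×3 correlation matrix: real symmetric positive definite with unit
diagonal.  (Over ℝ, `Matrix.PosDef` includes `IsHermitian`, i.e. symmetry.) -/
def IsCorrelationMatrix3 (Y : Matrix (Fin 3) (Fin 3) ℝ) : Prop :=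
  Y.PosDef ∧ ∀ i, Y i i = 1

/-- The map `Ψ` from parameters `(ρ₁₂, ρ₂₃, ρ₁₃|₂)` to the symmetric matrix
with unit diagonal, `y₁₂ = ρ₁₂`, `y₂₃ = ρ₂₃` and
`y₁₃ = ρ₁₂ρ₂₃ − ρ₁₃|₂·√(1−ρ₁₂²)·√(1−ρ₂₃²)`. -/
noncomputable def Psi3 (ρ : ℝ × ℝ × ℝ) : Matrix (Fin 3) (Fin 3) ℝ :=
  !![1, ρ.1, ρ.1 * ρ.2.1 - ρ.2.2 * Real.sqrt (1 - ρ.1 ^ 2) * Real.sqrt (1 - ρ.2.1 ^ 2);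
     ρ.1, 1, ρ.2.1;
     ρ.1 * ρ.2.1 - ρ.2.2 * Real.sqrt (1 - ρ.1 ^ 2) * Real.sqrt (1 - ρ.2.1 ^ 2), ρ.2.1, 1]

lemma quad3 (a b y : ℝ) (x : Fin 3 → ℝ) :
    dotProduct (star x)
      ((!![1, a, y; a, 1, b; y, b, 1] : Matrix (Fin 3) (Fin 3) ℝ).mulVec x)
    = x 0 ^ 2 + x 1 ^ 2 + x 2 ^ 2 + 2*a*x 0*x 1 + 2*b*x 1*x 2 + 2*y*x 0*x 2 := by
  simp [dotProduct, Matrix.mulVec, Fin.sum_univ_three]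
  ring

lemma corr_of (a b c : ℝ) (ha : -1 < a) (ha' : a < 1) (hb : -1 < b) (hb' : b < 1)
    (hc : -1 < c) (hc' : c < 1) :
    IsCorrelationMatrix3
      !![1, a, a * b - c * Real.sqrt (1 - a ^ 2) * Real.sqrt (1 - b ^ 2);
         a, 1, b;
         a * b - c * Real.sqrt (1 - a ^ 2) * Real.sqrt (1 - b ^ 2), b, 1] := by
  set s := Real.sqrt (1 - a ^ 2) with hs
  set t := Real.sqrt (1 - b ^ 2) with ht
  have hs0 : 0 < s := Real.sqrt_pos.mpr (by nlinarith)
  have ht0 : 0 < t := Real.sqrt_pos.mpr (by nlinarith)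
  have hs2 : s ^ 2 = 1 - a ^ 2 := Real.sq_sqrt (by nlinarith)
  have ht2 : t ^ 2 = 1 - b ^ 2 := Real.sq_sqrt (by nlinarith)
  constructor
  · rw [Matrix.posDef_iff_dotProduct_mulVec]; constructor
    · ext i j
      fin_cases i <;> fin_cases j <;> simp [Matrix.conjTranspose_apply]
    · intro x hx
      rw [quad3]
      have hid : x 0 ^ 2 + x 1 ^ 2 + x 2 ^ 2 + 2*a*x 0*x 1 + 2*b*x 1*x 2
            + 2*(a*b - c*s*t)*x 0*x 2
          = (a*x 0 + x 1 + b*x 2) ^ 2 + (s*x 0 - c*t*x 2) ^ 2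
            + (1 - c ^ 2) * t ^ 2 * x 2 ^ 2 := by
        linear_combination (-(x 0 ^ 2)) * hs2 + (-(x 2 ^ 2) * (1 - c^2) - (c * x 2)^2) * ht2
      rw [hid]
      by_cases h2 : x 2 = 0
      · by_cases h0 : x 0 = 0
        · have h1 : x 1 ≠ 0 := by
            intro h1; exact hx (by ext i; fin_cases i <;> assumption)
          have : 0 < x 1 ^ 2 := lt_of_le_of_ne (sq_nonneg _) (Ne.symm (pow_ne_zero 2 h1))
          rw [h0, h2]; nlinarith [sq_nonneg (s * x 0 - c * t * x 2)]
        · have hx0 : 0 < x 0 ^ 2 := lt_of_le_of_ne (sq_nonneg _) (Ne.symm (pow_ne_zero 2 h0))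
          rw [h2]
          nlinarith [sq_nonneg (a*x 0 + x 1), mul_pos (mul_pos hs0 hs0) hx0]
      · have hx2 : 0 < x 2 ^ 2 := lt_of_le_of_ne (sq_nonneg _) (Ne.symm (pow_ne_zero 2 h2))
        nlinarith [sq_nonneg (a*x 0 + x 1 + b*x 2), sq_nonneg (s*x 0 - c*t*x 2),
          mul_pos (mul_pos (show (0:ℝ) < 1 - c ^ 2 by nlinarith)
            (mul_pos ht0 ht0)) hx2]
  · intro i; fin_cases i <;> simp

theorem stmt9 :
    Set.BijOn Psi3
      ((Set.Ioo (-1 : ℝ) 1) ×ˢ (Set.Ioo (-1 : ℝ) 1) ×ˢ (Set.Ioo (-1 : ℝ) 1))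
      {Y | IsCorrelationMatrix3 Y} := by
  refine ⟨?_, ?_, ?_⟩
  · rintro ⟨a, b, c⟩ ⟨⟨ha, ha'⟩, ⟨hb, hb'⟩, ⟨hc, hc'⟩⟩
    exact corr_of a b c ha ha' hb hb' hc hc'
  · rintro ⟨a, b, c⟩ ⟨⟨ha, ha'⟩, ⟨hb, hb'⟩, ⟨hc, hc'⟩⟩
      ⟨a', b', c'⟩ ⟨⟨ha2, ha2'⟩, ⟨hb2, hb2'⟩, ⟨hc2, hc2'⟩⟩ h
    have e01 : a = a' := by
      have := congrFun (congrFun h 0) 1; simpa [Psi3] using this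
    have e12 : b = b' := by
      have := congrFun (congrFun h 1) 2; simpa [Psi3] using this
    have e02 := congrFun (congrFun h 0) 2
    simp only [Psi3] at e02
    have hs0 : 0 < Real.sqrt (1 - a ^ 2) := Real.sqrt_pos.mpr (by nlinarith)
    have ht0 : 0 < Real.sqrt (1 - b ^ 2) := Real.sqrt_pos.mpr (by nlinarith)
    have ec : c = c' := by
      simp at e02
      rw [← e01, ← e12] at e02
      nlinarith [e02, mul_pos hs0 ht0]
    simp [e01, e12, ec]
  · rintro Y hY
    have herm := hY.1.1
    have hdiag := hY.2
    have hsym : ∀ i j, Y j i = Y i j := by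
      intro i j
      have := congrFun (congrFun herm i) j
      simpa [Matrix.conjTranspose_apply] using this
    set a := Y 0 1 with hadef
    set b := Y 1 2 with hbdef
    set y := Y 0 2 with hydef
    -- 1 - a² > 0
    have hva : (0:ℝ) < 1 - a ^ 2 := by
      have hne : (![1, -a, 0] : Fin 3 → ℝ) ≠ 0 := by
        intro h; simpa using congrFun h 0
      have := hY.1.dotProduct_mulVec_pos hne
      simp [dotProduct, Matrix.mulVec, Fin.sum_univ_three,
        hdiag 0, hdiag 1, hsym 0 1] at this
      nlinarith [this]
    have hvb : (0:ℝ) < 1 - b ^ 2 := by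
      have hne : (![0, 1, -b] : Fin 3 → ℝ) ≠ 0 := by
        intro h; simpa using congrFun h 1
      have := hY.1.dotProduct_mulVec_pos hne
      simp [dotProduct, Matrix.mulVec, Fin.sum_univ_three,
        hdiag 1, hdiag 2, hsym 1 2] at this
      nlinarith [this]
    have hs0 : 0 < Real.sqrt (1 - a ^ 2) := Real.sqrt_pos.mpr hva
    have ht0 : 0 < Real.sqrt (1 - b ^ 2) := Real.sqrt_pos.mpr hvb
    have hs2 : Real.sqrt (1 - a ^ 2) ^ 2 = 1 - a ^ 2 := Real.sq_sqrt hva.le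
    have ht2 : Real.sqrt (1 - b ^ 2) ^ 2 = 1 - b ^ 2 := Real.sq_sqrt hvb.le
    set s := Real.sqrt (1 - a ^ 2)
    set t := Real.sqrt (1 - b ^ 2)
    have hdet : 0 < Y.det := hY.1.det_pos
    have hdetval : Y.det = 1 - a ^ 2 - b ^ 2 - y ^ 2 + 2 * a * b * y := by
      rw [Matrix.det_fin_three]
      rw [hdiag 0, hdiag 1, hdiag 2, hsym 0 1, hsym 1 2, hsym 0 2]
      ring
    set c := (a * b - y) / (s * t) with hcdef
    have hst : s * t ≠ 0 := ne_of_gt (mul_pos hs0 ht0)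
    have hcst : c * s * t = a * b - y := by
      rw [hcdef, mul_assoc, div_mul_cancel₀ _ hst]
    have hc2 : c ^ 2 < 1 := by
      have : (s * t) ^ 2 * (1 - c ^ 2) = Y.det := by
        have : (c * s * t) ^ 2 = (a * b - y) ^ 2 := by rw [hcst]
        rw [hdetval]
        nlinarith [this, hs2, ht2]
      nlinarith [mul_pos (mul_pos hs0 ht0) (mul_pos hs0 ht0), this, hdet]
    have hamem : a ∈ Set.Ioo (-1:ℝ) 1 := by
      have := abs_lt.mp ((sq_lt_one_iff_abs_lt_one _).mp (by linarith : a ^ 2 < 1))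
      exact ⟨this.1, this.2⟩
    have hbmem : b ∈ Set.Ioo (-1:ℝ) 1 := by
      have := abs_lt.mp ((sq_lt_one_iff_abs_lt_one _).mp (by linarith : b ^ 2 < 1))
      exact ⟨this.1, this.2⟩
    have hcmem : c ∈ Set.Ioo (-1:ℝ) 1 := by
      have := abs_lt.mp ((sq_lt_one_iff_abs_lt_one _).mp hc2)
      exact ⟨this.1, this.2⟩
    refine ⟨(a, b, c), ⟨hamem, hbmem, hcmem⟩, ?_⟩
    have hy' : a * b - c * s * t = y := by rw [hcst]; ring
    ext i j
    fin_cases i <;> fin_cases j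
    · simp [Psi3]; exact (hdiag 0).symm
    · simp [Psi3]; exact hadef
    · simp [Psi3]; linear_combination -hcst + hydef
    · simp [Psi3]; linear_combination hadef - hsym 0 1
    · simp [Psi3]; exact (hdiag 1).symm
    · simp [Psi3]; exact hbdef
    · simp [Psi3]; linear_combination -hcst + hydef - hsym 0 2
    · simp [Psi3]; linear_combination hbdef - hsym 1 2
    · simp [Psi3]; exact (hdiag 2).symm
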